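/- For every concept class H, the clique dimension is finite if and only if the Littlestone dimension is finite: CD(H) < ∞ ⇔ LD(H) < ∞. -/

import Mathlib

open MeasureTheory
open scoped ENNReal

namespace ContradictionGraph

variable {X : Type*}

/-- A hypothesis `h : X → Bool` is consistent with the dataset `S` of size `m` if it labels
every example in `S` correctly. -/
def Consistent (h : X → Bool) {m : ℕ} (S : Fin m → X × Bool) : Prop :=
  ∀ i, h (S i).1 = (S i).2

/-- A dataset `S` is realizable by the concept class `H` if some hypothesis in `H` is
consistent with it. -/
def Realizable (H : Set (X → Bool)) {m : ℕ} (S : Fin m → X × Bool) : Prop :=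
  ∃ h ∈ H, Consistent h S

/-- Two datasets contradict each other if there is a point `x` such that one of them contains
the labeled example `(x, 0)` and the other contains `(x, 1)`. -/
def Contradicts {m : ℕ} (S S' : Fin m → X × Bool) : Prop :=
  ∃ x : X, ((∃ i, S i = (x, false)) ∧ (∃ j, S' j = (x, true))) ∨
    ((∃ i, S i = (x, true)) ∧ (∃ j, S' j = (x, false)))

/-- The vertex set of the contradiction graph `G_m(H)`: all `H`-realizable datasets of
size `m`. -/
abbrev Vm (H : Set (X → Bool)) (m : ℕ) : Type _ :=
  {S : Fin m → X × Bool // Realizable H S}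

/-- A clique in the contradiction graph `G_m(H)`: a set of vertices every two distinct members
of which contradict each other. -/
def IsClique (H : Set (X → Bool)) (m : ℕ) (C : Set (Vm H m)) : Prop :=
  ∀ S ∈ C, ∀ S' ∈ C, S ≠ S' → Contradicts S.1 S'.1

/-- An independent set in the contradiction graph `G_m(H)`: a set of vertices no two of which
are adjacent (i.e. no two distinct members contradict each other). -/
def IsIndep (H : Set (X → Bool)) (m : ℕ) (I : Set (Vm H m)) : Prop :=
  ∀ S ∈ I, ∀ S' ∈ I, S ≠ S' → ¬ Contradicts S.1 S'.1

/-- The clique number `ω_m` of `G_m(H)`: the supremum of the sizes of cliques (in `ℕ∞`). -/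
noncomputable def cliqueNum (H : Set (X → Bool)) (m : ℕ) : ℕ∞ :=
  ⨆ (C : Set (Vm H m)) (_ : IsClique H m C), C.encard

/-- The clique dimension `CD(H) = sup { m : ω_m = 2^m } ∈ ℕ ∪ {∞}`. -/
noncomputable def cliqueDim (H : Set (X → Bool)) : ℕ∞ :=
  ⨆ (m : ℕ) (_ : cliqueNum H m = 2 ^ m), (m : ℕ∞)

/-- A fractional clique of `G_m(H)`: a nonnegative weight function on the vertices such that
the total weight of every independent set is at most `1`. -/
def IsFracClique (H : Set (X → Bool)) (m : ℕ) (δ : Vm H m → ℝ≥0∞) : Prop :=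
  ∀ I : Set (Vm H m), IsIndep H m I → ∑' S : I, δ S.1 ≤ 1

/-- The fractional clique number `ω*_m` of `G_m(H)`: the supremum of the sizes
`|δ| = Σ_S δ(S)` of fractional cliques. -/
noncomputable def fracCliqueNum (H : Set (X → Bool)) (m : ℕ) : ℝ≥0∞ :=
  ⨆ (δ : Vm H m → ℝ≥0∞) (_ : IsFracClique H m δ), ∑' S, δ S

/-- The fractional clique dimension `CD*(H) = sup { m : ω*_m = 2^m } ∈ ℕ ∪ {∞}`. -/
noncomputable def fracCliqueDim (H : Set (X → Bool)) : ℕ∞ :=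
  ⨆ (m : ℕ) (_ : fracCliqueNum H m = 2 ^ m), (m : ℕ∞)

end ContradictionGraph

namespace ContradictionGraph
variable {X : Type*}

/-- `H` shatters a mistake tree of depth `d`: there is an assignment of points of `X` to the
internal nodes of the complete binary tree of depth `d` (the point fed to branch `ε` at level
`i` depends only on the first `i` bits of `ε`) such that every root-to-leaf dataset is
realizable by `H`. -/
def ShattersTree (H : Set (X → Bool)) (d : ℕ) : Prop :=
  ∃ t : (Fin d → Bool) → Fin d → X,
    (∀ ε ε' : Fin d → Bool, ∀ i : Fin d, (∀ j : Fin d, j < i → ε j = ε' j) → t ε i = t ε' i) ∧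
    ∀ ε : Fin d → Bool, Realizable H (fun i => (t ε i, ε i))

/-- The Littlestone dimension `LD(H)`: the largest `d` such that `H` shatters a mistake tree of
depth `d` (equal to `∞` if `H` shatters arbitrarily deep trees). -/
noncomputable def littlestoneDim (H : Set (X → Bool)) : ℕ∞ :=
  ⨆ (d : ℕ) (_ : ShattersTree H d), (d : ℕ∞)

end ContradictionGraph

namespace ContradictionGraph

section Auxiliary

attribute [local instance] Classical.propDecidable

def SelfCon (s : Finset (X × Bool)) : Prop := ∀ x : X, ¬((x, false) ∈ s ∧ (x, true) ∈ s)

def RealF (H : Set (X → Bool)) (s : Finset (X × Bool)) : Prop :=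
  ∃ h ∈ H, ∀ p ∈ s, h p.1 = p.2

lemma RealF.selfCon {H : Set (X → Bool)} {s : Finset (X × Bool)} (hr : RealF H s) :
    SelfCon s := by
  obtain ⟨h, -, hc⟩ := hr
  intro x ⟨h0, h1⟩
  have e0 := hc _ h0
  have e1 := hc _ h1
  simp at e0 e1
  rw [e0] at e1; exact Bool.false_ne_true e1

def Confl (s t : Finset (X × Bool)) : Prop := ∃ y b, (y, b) ∈ s ∧ (y, !b) ∈ t

lemma card_dom {s : Finset (X × Bool)} (hs : SelfCon s) :
    (s.image Prod.fst).card = s.card := by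
  apply Finset.card_image_of_injOn
  intro p hp q hq hpq
  have : p.2 = q.2 := by
    cases hp2 : p.2 <;> cases hq2 : q.2
    · rfl
    · exfalso; exact hs p.1 ⟨by rwa [← hp2, Prod.mk.eta], by rw [hpq]; rwa [← hq2, Prod.mk.eta]⟩
    · exfalso; exact hs p.1 ⟨by rw [hpq]; rwa [← hq2, Prod.mk.eta], by rwa [← hp2, Prod.mk.eta]⟩
    · rfl
  exact Prod.ext hpq this

lemma mem_label {s : Finset (X × Bool)} (hs : SelfCon s) {p : X × Bool} (hp : p ∈ s) :
    p.2 = decide ((p.1, true) ∈ s) := by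
  cases h2 : p.2
  · have : (p.1, true) ∉ s := fun h => hs p.1 ⟨by rwa [← h2, Prod.mk.eta], h⟩
    exact (decide_eq_false this).symm
  · have : (p.1, true) ∈ s := by rwa [← h2, Prod.mk.eta]
    exact (decide_eq_true this).symm

/-- Counting functions: clique of pairwise conflicting self-consistent `m`-datasets has size `≤ 2^m`. -/
lemma clique_card_le_two_pow {m : ℕ} {C : Finset (Finset (X × Bool))}
    (hsc : ∀ s ∈ C, SelfCon s) (hcard : ∀ s ∈ C, s.card ≤ m)
    (hconf : ∀ s ∈ C, ∀ t ∈ C, s ≠ t → Confl s t) :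
    C.card ≤ 2 ^ m := by
  set P : Finset X := C.biUnion (fun s => s.image Prod.fst) with hP
  set A : Finset (X × Bool) → Finset (↥P → Bool) :=
    fun s => Finset.univ.filter
      (fun g => ∀ y : ↥P, y.1 ∈ s.image Prod.fst → g y = decide ((y.1, true) ∈ s)) with hA
  -- cardinality of A s
  have hAcard : ∀ s ∈ C, (A s).card = 2 ^ (P.card - s.card) := by
    intro s hsC
    have hsub : s.image Prod.fst ⊆ P := Finset.subset_biUnion_of_mem _ hsC
    have h1 : (A s).card = Fintype.card
        {g : ↥P → Bool // ∀ y : ↥P, y.1 ∈ s.image Prod.fst → g y = decide ((y.1, true) ∈ s)} := by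
      rw [Fintype.card_subtype]
    rw [h1]
    have e : {g : ↥P → Bool // ∀ y : ↥P, y.1 ∈ s.image Prod.fst → g y = decide ((y.1, true) ∈ s)}
        ≃ (↥(P \ s.image Prod.fst) → Bool) := by
      refine
        { toFun := fun G y => G.1 ⟨y.1, (Finset.mem_sdiff.mp y.2).1⟩
          invFun := fun g => ⟨fun y => if h : y.1 ∈ s.image Prod.fst then decide ((y.1, true) ∈ s)
            else g ⟨y.1, Finset.mem_sdiff.mpr ⟨y.2, h⟩⟩, fun y hy => by simp [hy]⟩
          left_inv := ?_
          right_inv := ?_ }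
      · intro G
        apply Subtype.ext
        funext y
        by_cases h : y.1 ∈ s.image Prod.fst
        · simp only [dif_pos h]
          exact (G.2 y h).symm
        · simp only [dif_neg h]
      · intro g
        funext y
        have h : y.1 ∉ s.image Prod.fst := (Finset.mem_sdiff.mp y.2).2
        simp only [dif_neg h]
    rw [Fintype.card_congr e, Fintype.card_fun, Fintype.card_bool,
      Fintype.card_coe, Finset.card_sdiff_of_subset hsub, card_dom (hsc s hsC)]
  -- pairwise disjoint
  have hdisj : ∀ s ∈ C, ∀ t ∈ C, s ≠ t → Disjoint (A s) (A t) := by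
    intro s hs t ht hst
    obtain ⟨y, b, hys, hyt⟩ := hconf s hs t ht hst
    rw [Finset.disjoint_left]
    intro g hgs hgt
    have hyP : y ∈ P := Finset.mem_biUnion.mpr ⟨s, hs, Finset.mem_image.mpr ⟨(y, b), hys, rfl⟩⟩
    have h1 : g ⟨y, hyP⟩ = decide ((y, true) ∈ s) :=
      (Finset.mem_filter.mp hgs).2 ⟨y, hyP⟩ (Finset.mem_image.mpr ⟨(y, b), hys, rfl⟩)
    have h2 : g ⟨y, hyP⟩ = decide ((y, true) ∈ t) :=
      (Finset.mem_filter.mp hgt).2 ⟨y, hyP⟩ (Finset.mem_image.mpr ⟨(y, !b), hyt, rfl⟩)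
    have e1 : (b : Bool) = decide ((y, true) ∈ s) := mem_label (hsc s hs) hys
    have e2 : (!b : Bool) = decide ((y, true) ∈ t) := mem_label (hsc t ht) hyt
    rw [← e1] at h1; rw [← e2] at h2
    rw [h1] at h2
    exact (Bool.not_ne_self b) h2.symm
  -- sum up
  have hsum : ∑ s ∈ C, (A s).card ≤ 2 ^ P.card := by
    rw [← Finset.card_biUnion hdisj]
    calc (C.biUnion A).card ≤ Finset.univ.card := Finset.card_le_univ _
      _ = 2 ^ P.card := by
          rw [Finset.card_univ, Fintype.card_fun, Fintype.card_bool, Fintype.card_coe]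
  have hlow : C.card * 2 ^ (P.card - m) ≤ ∑ s ∈ C, (A s).card := by
    calc C.card * 2 ^ (P.card - m) = ∑ _s ∈ C, 2 ^ (P.card - m) := by
          rw [Finset.sum_const, smul_eq_mul]
      _ ≤ ∑ s ∈ C, (A s).card := by
          apply Finset.sum_le_sum
          intro s hs
          rw [hAcard s hs]
          exact Nat.pow_le_pow_right (by norm_num) (Nat.sub_le_sub_left (hcard s hs) _)
  have hup : (2:ℕ) ^ P.card ≤ 2 ^ m * 2 ^ (P.card - m) := by
    rw [← pow_add]
    exact Nat.pow_le_pow_right (by norm_num) (by omega)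
  have hfin : C.card * 2 ^ (P.card - m) ≤ 2 ^ m * 2 ^ (P.card - m) :=
    le_trans hlow (le_trans hsum hup)
  exact Nat.le_of_mul_le_mul_right hfin (by positivity)


lemma shatters_zero {H : Set (X → Bool)} (hH : H.Nonempty) : ShattersTree H 0 :=
  ⟨fun _ => Fin.elim0, fun _ _ i => i.elim0, fun _ =>
    ⟨hH.some, hH.some_mem, fun i => i.elim0⟩⟩

lemma combine {H : Set (X → Bool)} {d : ℕ} (x : X)
    (T0 : ShattersTree {h | h ∈ H ∧ h x = false} d)
    (T1 : ShattersTree {h | h ∈ H ∧ h x = true} d) :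
    ShattersTree H (d + 1) := by
  obtain ⟨t0, hp0, hr0⟩ := T0
  obtain ⟨t1, hp1, hr1⟩ := T1
  refine ⟨fun ε => Fin.cons x ((bif ε 0 then t1 else t0) (Fin.tail ε)), ?_, ?_⟩
  · intro ε ε' i
    induction i using Fin.cases with
    | zero => intro _; simp
    | succ j =>
      intro hpre
      have h0 : ε 0 = ε' 0 := hpre 0 (Fin.succ_pos j)
      have htail : ∀ k : Fin d, k < j → Fin.tail ε k = Fin.tail ε' k := fun k hk =>
        hpre k.succ (by rwa [Fin.succ_lt_succ_iff])
      simp only [Fin.cons_succ, ← h0]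
      cases hb : ε 0
      · simpa using hp0 (Fin.tail ε) (Fin.tail ε') j htail
      · simpa using hp1 (Fin.tail ε) (Fin.tail ε') j htail
  · intro ε
    cases hb : ε 0
    · obtain ⟨h, hmem, hcons⟩ := hr0 (Fin.tail ε)
      refine ⟨h, hmem.1, fun i => ?_⟩
      induction i using Fin.cases with
      | zero => simpa [hb] using hmem.2
      | succ j => simpa [hb, Fin.tail] using hcons j
    · obtain ⟨h, hmem, hcons⟩ := hr1 (Fin.tail ε)
      refine ⟨h, hmem.1, fun i => ?_⟩
      induction i using Fin.cases with
      | zero => simpa [hb] using hmem.2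
      | succ j => simpa [hb, Fin.tail] using hcons j


lemma selfcon_both {s : Finset (X × Bool)} {x : X} (hs : SelfCon s) (c : Bool)
    (h1 : (x, c) ∈ s) (h2 : (x, !c) ∈ s) : False := by
  cases c
  · exact hs x ⟨h1, by simpa using h2⟩
  · exact hs x ⟨by simpa using h2, h1⟩

def fBound (m : ℕ) : ℕ → ℕ
  | 0 => 1
  | d + 1 => 2 * m * fBound m d + 2

lemma fBound_pos (m d : ℕ) : 1 ≤ fBound m d := by
  cases d <;> simp [fBound]

lemma tree_of_conf_family (m : ℕ) : ∀ (d : ℕ) (H : Set (X → Bool))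
    (C : Finset (Finset (X × Bool))),
    (∀ s ∈ C, s.card ≤ m ∧ RealF H s) →
    (∀ s ∈ C, ∀ t ∈ C, s ≠ t → Confl s t) →
    fBound m d ≤ C.card → ShattersTree H d := by
  intro d
  induction d with
  | zero =>
    intro H C hmem _ hcard
    obtain ⟨s, hs⟩ := Finset.card_pos.mp (lt_of_lt_of_le one_pos hcard)
    obtain ⟨h, hH, -⟩ := (hmem s hs).2
    exact shatters_zero ⟨h, hH⟩
  | succ d ih =>
    intro H C hmem hconf hcard
    set f := fBound m d with hf
    set N := C.card with hN
    set C0 : X → Finset (Finset (X × Bool)) :=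
      fun x => C.filter (fun s => (x, false) ∈ s) with hC0
    set C1 : X → Finset (Finset (X × Bool)) :=
      fun x => C.filter (fun s => (x, true) ∈ s) with hC1
    set P : Finset X := C.biUnion (fun s => s.image Prod.fst) with hP
    -- find a balanced point x
    have hbal : ∃ x : X, f ≤ (C0 x).card ∧ f ≤ (C1 x).card := by
      by_contra hno
      push_neg at hno
      set g : Finset (X × Bool) → X → ℕ := fun s x =>
        if (x, false) ∈ s then (C1 x).card else if (x, true) ∈ s then (C0 x).card else 0 with hg
      -- step A
      have stepA : ∀ s ∈ C, N - 1 ≤ ∑ x ∈ P, g s x := by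
        intro s hs
        have hsub : C.erase s ⊆ P.biUnion (fun x =>
            if (x, false) ∈ s then C1 x else if (x, true) ∈ s then C0 x else ∅) := by
          intro t ht
          have htC : t ∈ C := Finset.mem_of_mem_erase ht
          have hts : t ≠ s := Finset.ne_of_mem_erase ht
          obtain ⟨y, b, hys, hyt⟩ := hconf s hs t htC (Ne.symm hts)
          have hyP : y ∈ P :=
            Finset.mem_biUnion.mpr ⟨s, hs, Finset.mem_image.mpr ⟨(y, b), hys, rfl⟩⟩
          apply Finset.mem_biUnion.mpr ⟨y, hyP, ?_⟩
          cases hb : b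
          · rw [hb] at hys hyt
            rw [if_pos hys]
            exact Finset.mem_filter.mpr ⟨htC, by simpa using hyt⟩
          · rw [hb] at hys hyt
            have hnf : (y, false) ∉ s := fun h => (hmem s hs).2.selfCon y ⟨h, hys⟩
            rw [if_neg hnf, if_pos hys]
            exact Finset.mem_filter.mpr ⟨htC, by simpa using hyt⟩
        calc N - 1 = (C.erase s).card := by rw [Finset.card_erase_of_mem hs]
          _ ≤ (P.biUnion (fun x =>
              if (x, false) ∈ s then C1 x else if (x, true) ∈ s then C0 x else ∅)).card :=
            Finset.card_le_card hsub
          _ ≤ ∑ x ∈ P, (if (x, false) ∈ s then C1 x else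
              if (x, true) ∈ s then C0 x else ∅).card := Finset.card_biUnion_le
          _ = ∑ x ∈ P, g s x := by
            apply Finset.sum_congr rfl
            intro x _
            simp only [hg]
            split_ifs <;> simp
      -- step C : bound column sums
      have stepC : ∀ x : X, ∑ s ∈ C, g s x ≤ 2 * ((f - 1) * ((C0 x).card + (C1 x).card)) := by
        intro x
        have hsplit : ∑ s ∈ C, g s x ≤ (C0 x).card * (C1 x).card + (C1 x).card * (C0 x).card := by
          rw [← Finset.sum_filter_add_sum_filter_not C (fun s => (x, false) ∈ s)]
          have e1 : ∑ s ∈ C.filter (fun s => (x, false) ∈ s), g s x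
              = (C0 x).card * (C1 x).card := by
            rw [Finset.sum_congr rfl (fun s hs => ?_), Finset.sum_const, smul_eq_mul]
            exact if_pos (Finset.mem_filter.mp hs).2
          have e2 : ∑ s ∈ C.filter (fun s => ¬(x, false) ∈ s), g s x
              ≤ (C1 x).card * (C0 x).card := by
            have : ∀ s ∈ C.filter (fun s => ¬(x, false) ∈ s), g s x
                = if (x, true) ∈ s then (C0 x).card else 0 := by
              intro s hs
              simp only [hg]
              rw [if_neg (Finset.mem_filter.mp hs).2]
            rw [Finset.sum_congr rfl this, ← Finset.sum_filter]
            have hsub : (C.filter (fun s => ¬(x, false) ∈ s)).filter (fun s => (x, true) ∈ s)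
                ⊆ C1 x := by
              intro s hs
              exact Finset.mem_filter.mpr ⟨Finset.mem_of_mem_filter _
                (Finset.mem_of_mem_filter s hs), (Finset.mem_filter.mp hs).2⟩
            calc _ ≤ ((C1 x).card) * (C0 x).card := by
                  rw [Finset.sum_const, smul_eq_mul]
                  exact Nat.mul_le_mul_right _ (Finset.card_le_card hsub)
              _ = _ := rfl
          omega
        have hmin : (C0 x).card ≤ f - 1 ∨ (C1 x).card ≤ f - 1 := by
          by_cases h0 : f ≤ (C0 x).card
          · have := hno x h0; right; omega
          · left; omega
        rcases hmin with h | h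
        · calc ∑ s ∈ C, g s x ≤ (C0 x).card * (C1 x).card + (C1 x).card * (C0 x).card := hsplit
            _ = 2 * ((C0 x).card * (C1 x).card) := by ring
            _ ≤ 2 * ((f - 1) * ((C0 x).card + (C1 x).card)) := by
                apply Nat.mul_le_mul_left
                calc (C0 x).card * (C1 x).card ≤ (f - 1) * (C1 x).card :=
                      Nat.mul_le_mul_right _ h
                  _ ≤ (f - 1) * ((C0 x).card + (C1 x).card) :=
                      Nat.mul_le_mul_left _ (by omega)
        · calc ∑ s ∈ C, g s x ≤ (C0 x).card * (C1 x).card + (C1 x).card * (C0 x).card := hsplit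
            _ = 2 * ((C1 x).card * (C0 x).card) := by ring
            _ ≤ 2 * ((f - 1) * ((C0 x).card + (C1 x).card)) := by
                apply Nat.mul_le_mul_left
                calc (C1 x).card * (C0 x).card ≤ (f - 1) * (C0 x).card :=
                      Nat.mul_le_mul_right _ h
                  _ ≤ (f - 1) * ((C0 x).card + (C1 x).card) :=
                      Nat.mul_le_mul_left _ (by omega)
      -- step D : total weight
      have stepD : ∑ x ∈ P, ((C0 x).card + (C1 x).card) ≤ N * m := by
        have e : ∀ x ∈ P, (C0 x).card + (C1 x).card
            = ∑ s ∈ C, ((if (x, false) ∈ s then 1 else 0) + (if (x, true) ∈ s then 1 else 0)) := by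
          intro x _
          rw [Finset.sum_add_distrib, ← Finset.card_filter, ← Finset.card_filter]
        rw [Finset.sum_congr rfl e, Finset.sum_comm]
        have inner : ∀ s ∈ C, ∑ x ∈ P,
            ((if (x, false) ∈ s then 1 else 0) + (if (x, true) ∈ s then 1 else 0)) ≤ m := by
          intro s hs
          rw [Finset.sum_add_distrib, ← Finset.card_filter, ← Finset.card_filter]
          set A := P.filter (fun x => (x, false) ∈ s) with hA
          set B := P.filter (fun x => (x, true) ∈ s) with hB
          have hinjA : (A.image (fun x => (x, false))).card = A.card :=
            Finset.card_image_of_injective _ (fun a b hab => (Prod.mk.injEq _ _ _ _).mp hab |>.1)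
          have hinjB : (B.image (fun x => (x, true))).card = B.card :=
            Finset.card_image_of_injective _ (fun a b hab => (Prod.mk.injEq _ _ _ _).mp hab |>.1)
          have hdisj : Disjoint (A.image (fun x => (x, false))) (B.image (fun x => (x, true))) := by
            rw [Finset.disjoint_left]
            rintro p hpA hpB
            obtain ⟨a, -, rfl⟩ := Finset.mem_image.mp hpA
            obtain ⟨b, -, hb⟩ := Finset.mem_image.mp hpB
            exact Bool.false_ne_true ((Prod.mk.injEq _ _ _ _).mp hb).2.symm
          have hsubU : (A.image (fun x => (x, false))) ∪ (B.image (fun x => (x, true))) ⊆ s := by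
            apply Finset.union_subset
            · intro p hp
              obtain ⟨a, ha, rfl⟩ := Finset.mem_image.mp hp
              exact (Finset.mem_filter.mp ha).2
            · intro p hp
              obtain ⟨a, ha, rfl⟩ := Finset.mem_image.mp hp
              exact (Finset.mem_filter.mp ha).2
          calc A.card + B.card = (A.image (fun x => (x, false))).card
                + (B.image (fun x => (x, true))).card := by rw [hinjA, hinjB]
            _ = ((A.image (fun x => (x, false))) ∪ (B.image (fun x => (x, true)))).card :=
              (Finset.card_union_of_disjoint hdisj).symm
            _ ≤ s.card := Finset.card_le_card hsubU
            _ ≤ m := (hmem s hs).1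
        calc ∑ s ∈ C, ∑ x ∈ P, _ ≤ ∑ s ∈ C, m := Finset.sum_le_sum inner
          _ = N * m := by rw [Finset.sum_const, smul_eq_mul]
      -- combine the counts
      have main : N * (N - 1) ≤ 2 * ((f - 1) * (N * m)) := by
        calc N * (N - 1) = ∑ _s ∈ C, (N - 1) := by rw [Finset.sum_const, smul_eq_mul]
          _ ≤ ∑ s ∈ C, ∑ x ∈ P, g s x := Finset.sum_le_sum stepA
          _ = ∑ x ∈ P, ∑ s ∈ C, g s x := Finset.sum_comm
          _ ≤ ∑ x ∈ P, 2 * ((f - 1) * ((C0 x).card + (C1 x).card)) :=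
            Finset.sum_le_sum (fun x _ => stepC x)
          _ = 2 * ((f - 1) * ∑ x ∈ P, ((C0 x).card + (C1 x).card)) := by
            rw [← Finset.mul_sum, ← Finset.mul_sum]
          _ ≤ 2 * ((f - 1) * (N * m)) := by
            apply Nat.mul_le_mul_left
            exact Nat.mul_le_mul_left _ stepD
      have hNpos : 0 < N := by
        have := fBound_pos m (d + 1)
        omega
      have hcan : N - 1 ≤ 2 * ((f - 1) * m) := by
        have h2 : N * (N - 1) ≤ (2 * ((f - 1) * m)) * N := by
          calc N * (N - 1) ≤ 2 * ((f - 1) * (N * m)) := main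
            _ = (2 * ((f - 1) * m)) * N := by ring
        rw [mul_comm] at h2
        exact Nat.le_of_mul_le_mul_right h2 hNpos
      -- contradiction with N ≥ 2 m f + 2
      have hf1 : 1 ≤ f := fBound_pos m d
      obtain ⟨a, ha⟩ : ∃ a, f = a + 1 := ⟨f - 1, by omega⟩
      have hNl : 2 * m * (a + 1) + 2 ≤ N := by
        rw [← ha]; exact hcard
      have e1 : 2 * m * (a + 1) = 2 * (a * m) + 2 * m := by ring
      have e2 : 2 * ((f - 1) * m) = 2 * (a * m) := by rw [ha]; simp
      rw [e2] at hcan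
      rw [e1] at hNl
      omega
    obtain ⟨x, hx0, hx1⟩ := hbal
    -- build the two branches
    have key : ∀ c : Bool, f ≤ (C.filter (fun s => (x, c) ∈ s)).card →
        ShattersTree {h | h ∈ H ∧ h x = c} d := by
      intro c hc
      set Cc := C.filter (fun s => (x, c) ∈ s) with hCc
      set D := Cc.image (fun s => s.erase (x, c)) with hD
      have hinj : Set.InjOn (fun s : Finset (X × Bool) => s.erase (x, c)) ↑Cc := by
        intro s hs t ht hst
        have hs' : (x, c) ∈ s := (Finset.mem_filter.mp hs).2
        have ht' : (x, c) ∈ t := (Finset.mem_filter.mp ht).2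
        rw [← Finset.insert_erase hs', ← Finset.insert_erase ht']
        simp only at hst
        rw [hst]
      have hDcard : D.card = Cc.card := Finset.card_image_of_injOn hinj
      apply ih {h | h ∈ H ∧ h x = c} D
      · intro s' hs'
        obtain ⟨s, hs, rfl⟩ := Finset.mem_image.mp hs'
        have hsC : s ∈ C := Finset.mem_of_mem_filter _ hs
        have hxc : (x, c) ∈ s := (Finset.mem_filter.mp hs).2
        obtain ⟨h, hH, hcons⟩ := (hmem s hsC).2
        refine ⟨le_trans (Finset.card_le_card (Finset.erase_subset _ _)) (hmem s hsC).1,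
          ⟨h, ⟨hH, by simpa using hcons _ hxc⟩, fun p hp => hcons p (Finset.mem_of_mem_erase hp)⟩⟩
      · intro s' hs' t' ht' hst
        obtain ⟨s, hs, rfl⟩ := Finset.mem_image.mp hs'
        obtain ⟨t, ht, rfl⟩ := Finset.mem_image.mp ht'
        have hsC : s ∈ C := Finset.mem_of_mem_filter _ hs
        have htC : t ∈ C := Finset.mem_of_mem_filter _ ht
        have hne : s ≠ t := fun h => hst (by rw [h])
        obtain ⟨y, b, hys, hyt⟩ := hconf s hsC t htC hne
        refine ⟨y, b, Finset.mem_erase.mpr ⟨?_, hys⟩, Finset.mem_erase.mpr ⟨?_, hyt⟩⟩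
        · intro h
          have hyx : y = x := ((Prod.mk.injEq _ _ _ _).mp h).1
          have hbc : b = c := ((Prod.mk.injEq _ _ _ _).mp h).2
          subst hyx; subst hbc
          exact selfcon_both (hmem t htC).2.selfCon b (Finset.mem_filter.mp ht).2 hyt
        · intro h
          have hyx : y = x := ((Prod.mk.injEq _ _ _ _).mp h).1
          have hbc : (!b) = c := ((Prod.mk.injEq _ _ _ _).mp h).2
          have hxbs : (x, c) ∈ s := (Finset.mem_filter.mp hs).2
          rw [← hyx, ← hbc] at hxbs
          exact selfcon_both (hmem s hsC).2.selfCon b hys hxbs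
      · rw [hDcard]; exact hc
    exact combine x (key false hx0) (key true hx1)


----------------------------------------------------------------
-- new material

/-- the finset of labeled examples of a dataset -/
noncomputable def toFS {H : Set (X → Bool)} {m : ℕ} (S : Vm H m) : Finset (X × Bool) :=
  Finset.univ.image S.1

lemma toFS_real {H : Set (X → Bool)} {m : ℕ} (S : Vm H m) : RealF H (toFS S) := by
  obtain ⟨h, hH, hc⟩ := S.2
  refine ⟨h, hH, fun p hp => ?_⟩
  obtain ⟨i, -, rfl⟩ := Finset.mem_image.mp hp
  exact hc i

lemma toFS_card {H : Set (X → Bool)} {m : ℕ} (S : Vm H m) : (toFS S).card ≤ m := by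
  simpa [toFS] using Finset.card_image_le (s := (Finset.univ : Finset (Fin m))) (f := S.1)

lemma contradicts_confl {H : Set (X → Bool)} {m : ℕ} {S T : Vm H m}
    (h : Contradicts S.1 T.1) : Confl (toFS S) (toFS T) := by
  obtain ⟨x, ⟨⟨i, hi⟩, ⟨j, hj⟩⟩ | ⟨⟨i, hi⟩, ⟨j, hj⟩⟩⟩ := h
  · exact ⟨x, false, Finset.mem_image.mpr ⟨i, Finset.mem_univ i, hi⟩,
      Finset.mem_image.mpr ⟨j, Finset.mem_univ j, by simpa using hj⟩⟩
  · exact ⟨x, true, Finset.mem_image.mpr ⟨i, Finset.mem_univ i, hi⟩,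
      Finset.mem_image.mpr ⟨j, Finset.mem_univ j, by simpa using hj⟩⟩

lemma confl_self_false {H : Set (X → Bool)} {m : ℕ} {S : Vm H m}
    (h : Confl (toFS S) (toFS S)) : False := by
  obtain ⟨y, b, h1, h2⟩ := h
  exact selfcon_both (toFS_real S).selfCon b h1 h2


/-- bridging: a finite clique yields an equinumerous conflicting family of finsets -/
lemma clique_to_finset {H : Set (X → Bool)} {m : ℕ} {K : Set (Vm H m)} (hK : IsClique H m K)
    (hfin : K.Finite) :
    ∃ D : Finset (Finset (X × Bool)), D.card = hfin.toFinset.card ∧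
      (∀ s ∈ D, s.card ≤ m ∧ RealF H s) ∧ (∀ s ∈ D, ∀ t ∈ D, s ≠ t → Confl s t) := by
  have hinj : Set.InjOn toFS (hfin.toFinset : Set (Vm H m)) := by
    intro S hS T hT hST
    by_contra hne
    have hc := hK S (by simpa using hS) T (by simpa using hT) hne
    have := contradicts_confl hc
    rw [hST] at this
    exact confl_self_false this
  refine ⟨hfin.toFinset.image toFS, Finset.card_image_of_injOn hinj, ?_, ?_⟩
  · intro s hs
    obtain ⟨S, -, rfl⟩ := Finset.mem_image.mp hs
    exact ⟨toFS_card S, toFS_real S⟩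
  · intro s hs t ht hst
    obtain ⟨S, hS, rfl⟩ := Finset.mem_image.mp hs
    obtain ⟨T, hT, rfl⟩ := Finset.mem_image.mp ht
    have hne : S ≠ T := fun h => hst (by rw [h])
    exact contradicts_confl (hK S (by simpa using hS) T (by simpa using hT) hne)

/-- Lemma A: every clique has size at most `2^m`. -/
lemma encard_clique_le {H : Set (X → Bool)} {m : ℕ} {C : Set (Vm H m)} (hC : IsClique H m C) :
    C.encard ≤ ((2 ^ m : ℕ) : ℕ∞) := by
  by_contra hlt
  push_neg at hlt
  have h1 : ((2 ^ m : ℕ) : ℕ∞) + 1 ≤ C.encard := (ENat.add_one_le_iff (ENat.coe_ne_top _)).mpr hlt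
  have h1' : ((2 ^ m + 1 : ℕ) : ℕ∞) ≤ C.encard := by push_cast; exact h1
  obtain ⟨K, hKC, hKcard⟩ := Set.exists_subset_encard_eq h1'
  have hfin : K.Finite := Set.finite_of_encard_eq_coe hKcard
  have hKclique : IsClique H m K := fun S hS T hT hne => hC S (hKC hS) T (hKC hT) hne
  obtain ⟨D, hDcard, hDmem, hDconf⟩ := clique_to_finset hKclique hfin
  have hcard2 : D.card = 2 ^ m + 1 := by
    rw [hDcard]
    have := hfin.encard_eq_coe_toFinset_card
    rw [this] at hKcard
    exact_mod_cast hKcard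
  have := clique_card_le_two_pow (fun s hs => (hDmem s hs).2.selfCon)
    (fun s hs => (hDmem s hs).1) hDconf
  omega

/-- extraction: a big clique number yields a shattered tree. -/
lemma shatters_of_cliqueNum {H : Set (X → Bool)} {m : ℕ} (hcn : cliqueNum H m = 2 ^ m)
    (d : ℕ) (hle : fBound m d ≤ 2 ^ m) : ShattersTree H d := by
  set k := fBound m d with hk
  have hk1 : 1 ≤ k := fBound_pos m d
  have hsup : ((k - 1 : ℕ) : ℕ∞) < cliqueNum H m := by
    rw [hcn]
    calc ((k - 1 : ℕ) : ℕ∞) < ((k : ℕ) : ℕ∞) := by exact_mod_cast Nat.sub_lt hk1 one_pos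
      _ ≤ ((2 ^ m : ℕ) : ℕ∞) := by exact_mod_cast hle
      _ = 2 ^ m := by push_cast; ring
  rw [cliqueNum] at hsup
  obtain ⟨C, hC⟩ := lt_iSup_iff.mp hsup
  obtain ⟨hCclique, hClt⟩ := lt_iSup_iff.mp hC
  have hkle : ((k : ℕ) : ℕ∞) ≤ C.encard := by
    have := (ENat.add_one_le_iff (show ((k - 1 : ℕ) : ℕ∞) ≠ ⊤ by simp)).mpr hClt
    calc ((k : ℕ) : ℕ∞) = ((k - 1 + 1 : ℕ) : ℕ∞) := by congr 1; omega
      _ = ((k - 1 : ℕ) : ℕ∞) + 1 := by push_cast; ring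
      _ ≤ C.encard := this
  obtain ⟨K, hKC, hKcard⟩ := Set.exists_subset_encard_eq hkle
  have hfin : K.Finite := Set.finite_of_encard_eq_coe hKcard
  have hKclique : IsClique H m K := fun S hS T hT hne => hCclique S (hKC hS) T (hKC hT) hne
  obtain ⟨D, hDcard, hDmem, hDconf⟩ := clique_to_finset hKclique hfin
  apply tree_of_conf_family m d H D hDmem hDconf
  rw [hDcard]
  have := hfin.encard_eq_coe_toFinset_card
  rw [this] at hKcard
  have : hfin.toFinset.card = k := by exact_mod_cast hKcard
  omega

/-- Lemma B: a shattered tree of depth `d` gives clique number exactly `2^d`. -/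
lemma cliqueNum_of_shatters {H : Set (X → Bool)} {d : ℕ} (hs : ShattersTree H d) :
    cliqueNum H d = 2 ^ d := by
  obtain ⟨t, hpre, hreal⟩ := hs
  apply le_antisymm
  · apply iSup_le; intro C; apply iSup_le; intro hC
    calc C.encard ≤ ((2 ^ d : ℕ) : ℕ∞) := encard_clique_le hC
      _ = 2 ^ d := by push_cast; ring
  · set ψ : (Fin d → Bool) → Vm H d := fun ε => ⟨fun i => (t ε i, ε i), hreal ε⟩ with hψ
    have hcontr : ∀ ε ε' : Fin d → Bool, ε ≠ ε' → Contradicts (ψ ε).1 (ψ ε').1 := by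
      intro ε ε' hne
      have hnonempty : (Finset.univ.filter (fun i => ε i ≠ ε' i)).Nonempty := by
        by_contra hempty
        apply hne
        funext i
        by_contra hi
        exact hempty ⟨i, Finset.mem_filter.mpr ⟨Finset.mem_univ i, hi⟩⟩
      set i := (Finset.univ.filter (fun i => ε i ≠ ε' i)).min' hnonempty with hi
      have himem : ε i ≠ ε' i :=
        (Finset.mem_filter.mp ((Finset.univ.filter (fun i => ε i ≠ ε' i)).min'_mem hnonempty)).2
      have hprefix : ∀ j : Fin d, j < i → ε j = ε' j := by
        intro j hj
        by_contra hjne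
        exact absurd (Finset.min'_le _ j (Finset.mem_filter.mpr ⟨Finset.mem_univ j, hjne⟩))
          (not_le.mpr hj)
      have hteq : t ε i = t ε' i := hpre ε ε' i hprefix
      refine ⟨t ε i, ?_⟩
      cases hεi : ε i
      · have hε'i : ε' i = true := by
          cases h : ε' i
          · exact absurd (hεi.trans h.symm) himem
          · rfl
        left
        exact ⟨⟨i, by simp [hψ, hεi, hε'i, hteq]⟩, ⟨i, by simp [hψ, hεi, hε'i, hteq]⟩⟩
      · have hε'i : ε' i = false := by
          cases h : ε' i
          · rfl
          · exact absurd (hεi.trans h.symm) himem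
        right
        exact ⟨⟨i, by simp [hψ, hεi, hε'i, hteq]⟩, ⟨i, by simp [hψ, hεi, hε'i, hteq]⟩⟩
    have hψinj : Function.Injective ψ := by
      intro ε ε' h
      by_contra hne
      have hc := hcontr ε ε' hne
      rw [h] at hc
      obtain ⟨x, ⟨⟨i, hi⟩, ⟨j, hj⟩⟩ | ⟨⟨i, hi⟩, ⟨j, hj⟩⟩⟩ := hc
      · obtain ⟨g, -, hg⟩ := (ψ ε').2
        have e1 := hg i; have e2 := hg j
        rw [hi] at e1; rw [hj] at e2
        simp at e1 e2; rw [e1] at e2; exact Bool.false_ne_true e2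
      · obtain ⟨g, -, hg⟩ := (ψ ε').2
        have e1 := hg i; have e2 := hg j
        rw [hi] at e1; rw [hj] at e2
        simp at e1 e2; rw [e2] at e1; exact Bool.false_ne_true e1
    have hclique : IsClique H d (Set.range ψ) := by
      rintro S ⟨ε, rfl⟩ T ⟨ε', rfl⟩ hne
      exact hcontr ε ε' (fun h => hne (by rw [h]))
    have hencard : (Set.range ψ).encard = 2 ^ d := by
      rw [← Set.image_univ, Set.InjOn.encard_image (hψinj.injOn), Set.encard_univ]
      simp [ENat.card_eq_coe_fintype_card]
    calc (2 : ℕ∞) ^ d = (Set.range ψ).encard := hencard.symm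
      _ ≤ ⨆ (_ : IsClique H d (Set.range ψ)), (Set.range ψ).encard := le_iSup_iff.mpr
          (fun b hb => by simpa [hclique] using hb hclique)
      _ ≤ cliqueNum H d := le_iSup (fun C => ⨆ (_ : IsClique H d C), C.encard) _

/-- helper: `ℕ∞`-valued sup over a predicate is `≠ ⊤` iff the predicate is bounded. -/
lemma iSup_pred_ne_top_iff {S : ℕ → Prop} :
    (⨆ d, ⨆ _ : S d, (d : ℕ∞)) ≠ ⊤ ↔ ∃ D : ℕ, ∀ d, S d → d ≤ D := by
  constructor
  · intro h
    obtain ⟨n, hn⟩ := WithTop.ne_top_iff_exists.mp h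
    refine ⟨n, fun d hd => ?_⟩
    have : (d : ℕ∞) ≤ ⨆ d, ⨆ _ : S d, (d : ℕ∞) := by
      refine le_trans ?_ (le_iSup (fun d => ⨆ _ : S d, (d : ℕ∞)) d)
      simp [hd]
    rw [← hn] at this
    exact WithTop.coe_le_coe.mp this
  · rintro ⟨D, hD⟩
    have : (⨆ d, ⨆ _ : S d, (d : ℕ∞)) ≤ (D : ℕ∞) := by
      apply iSup_le; intro d; apply iSup_le; intro hd
      exact_mod_cast hD d hd
    exact ne_top_of_le_ne_top (by simp) this

lemma eight_k_sq_le (k : ℕ) (hk : 4 ≤ k) : 8 * k * k ≤ 4 ^ k := by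
  induction k with
  | zero => omega
  | succ n ih =>
    rcases Nat.lt_or_ge n 4 with h | h
    · have hn3 : n = 3 := by omega
      subst hn3; norm_num
    · have hn := ih (by omega)
      have step : 8 * (n + 1) * (n + 1) ≤ 4 * (8 * n * n) := by nlinarith
      calc 8 * (n + 1) * (n + 1) ≤ 4 * (8 * n * n) := step
        _ ≤ 4 * 4 ^ n := by omega
        _ = 4 ^ (n + 1) := by ring

lemma fBound_le_pow (m d : ℕ) : fBound m d ≤ (2 * m + 2) ^ d := by
  induction d with
  | zero => simp [fBound]
  | succ d ih =>
    have h1 : 1 ≤ fBound m d := fBound_pos m d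
    calc fBound m (d + 1) = 2 * m * fBound m d + 2 := rfl
      _ ≤ 2 * m * fBound m d + 2 * fBound m d := by omega
      _ = (2 * m + 2) * fBound m d := by ring
      _ ≤ (2 * m + 2) * (2 * m + 2) ^ d := Nat.mul_le_mul_left _ ih
      _ = (2 * m + 2) ^ (d + 1) := by ring

lemma growth (d : ℕ) : ∀ m : ℕ, 2 * d * (d + 4) ≤ m → fBound m d ≤ 2 ^ m := by
  intro m hm
  rcases Nat.eq_zero_or_pos d with rfl | hd
  · have : fBound m 0 = 1 := rfl
    rw [this]
    exact Nat.one_le_two_pow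
  refine le_trans (fBound_le_pow m d) ?_
  set k := m / (2 * d) with hkdef
  have h2d : 0 < 2 * d := by omega
  have hk4 : d + 4 ≤ k := by
    rw [hkdef, Nat.le_div_iff_mul_le h2d]
    calc (d + 4) * (2 * d) = 2 * d * (d + 4) := by ring
      _ ≤ m := hm
  have hmod : m % (2 * d) < 2 * d := Nat.mod_lt m h2d
  have hdiv : 2 * d * k + m % (2 * d) = m := Nat.div_add_mod m (2 * d)
  have hm_low : 2 * d * k ≤ m := by omega
  have e4 : 2 * d * (k + 1) = 2 * d * k + 2 * d := by ring
  have hm_up : m + 1 ≤ 2 * d * (k + 1) := by omega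
  have hstep1 : 2 * m + 2 ≤ 4 * d * (k + 1) := by
    calc 2 * m + 2 = 2 * (m + 1) := by ring
      _ ≤ 2 * (2 * d * (k + 1)) := Nat.mul_le_mul_left 2 hm_up
      _ = 4 * d * (k + 1) := by ring
  have hdk : d ≤ k := by omega
  have hk1 : 1 ≤ k := by omega
  have hstep2 : 4 * d * (k + 1) ≤ 8 * k * k := by nlinarith
  have hstep3 : 8 * k * k ≤ 4 ^ k := eight_k_sq_le k (by omega)
  have hbase : 2 * m + 2 ≤ 4 ^ k := le_trans hstep1 (le_trans hstep2 hstep3)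
  have hfour : (4 : ℕ) ^ k = 2 ^ (2 * k) := by
    rw [show (4 : ℕ) = 2 ^ 2 from rfl, ← pow_mul]
  have hexp : 2 * k * d ≤ m := by
    have : 2 * k * d = 2 * d * k := by ring
    omega
  calc (2 * m + 2) ^ d ≤ (4 ^ k) ^ d := Nat.pow_le_pow_left hbase d
    _ = 2 ^ (2 * k * d) := by rw [hfour, ← pow_mul]
    _ ≤ 2 ^ m := Nat.pow_le_pow_right (by norm_num) hexp


end Auxiliary

/-- For every concept class `H`, the clique dimension is finite if and only if
the Littlestone dimension is finite: `CD(H) < ∞ ⇔ LD(H) < ∞`. -/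
theorem cliqueDim_finite_iff_littlestoneDim_finite {X : Type*} [Countable X]
    (H : Set (X → Bool)) (hH : H.Nonempty) :
    cliqueDim H ≠ ⊤ ↔ littlestoneDim H ≠ ⊤ := by
  rw [cliqueDim, littlestoneDim, iSup_pred_ne_top_iff, iSup_pred_ne_top_iff]
  constructor
  · rintro ⟨D, hD⟩
    exact ⟨D, fun d hd => hD d (cliqueNum_of_shatters hd)⟩
  · rintro ⟨D, hD⟩
    refine ⟨2 * (D + 1) * ((D + 1) + 4), fun m hm => ?_⟩
    by_contra hgt
    push_neg at hgt
    have hg : fBound m (D + 1) ≤ 2 ^ m := growth (D + 1) m (by omega)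
    have := hD (D + 1) (shatters_of_cliqueNum hm (D + 1) hg)
    omega

end ContradictionGraph
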